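/- arXiv:1506.07757 — 2 statements merged into one kernel-verified Lean document; each statement's English description precedes it below -/
import Mathlib

section
/- Define for real z ∈ (0, 1/27) the functions ϖ̃₁(z) = ∑_{j≥1} 3·(3j−1)!/(j!)³·(−z)^j, ϖ̃₂(z) = ∑_{j≥1} 18·(3j−1)!/(j!)³·(H_{3j−1} − H_j)·(−z)^j, and u(z) = z·exp(ϖ̃₁(z)). Then, as z → 0⁺, ϖ̃₂(z) − ϖ̃₁(z)² = −18·u(z) + (135/2)·u(z)² − 488·u(z)³ + O(z⁴). -/
open Real Filter Asymptotics

/-- The `k`-th harmonic number `H_k = ∑_{i=1}^k 1/i`. -/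
noncomputable def harmonicNum (k : ℕ) : ℝ := ∑ i ∈ Finset.range k, (1 : ℝ) / (i + 1)

/-- The coefficients `c_j = 3 (3j-1)! / (j!)^3` of the logarithmic period of local P². -/
noncomputable def localP2c (j : ℕ) : ℝ :=
  3 * (Nat.factorial (3 * j - 1) : ℝ) / ((Nat.factorial j : ℝ)) ^ 3

/-- The coefficients `d_j = 18 (3j-1)! / (j!)^3 (H_{3j-1} - H_j)`. -/
noncomputable def localP2d (j : ℕ) : ℝ :=
  18 * (Nat.factorial (3 * j - 1) : ℝ) / ((Nat.factorial j : ℝ)) ^ 3 *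
    (harmonicNum (3 * j - 1) - harmonicNum j)

/-- The power-series part `ϖ̃₁(z) = ∑_{j ≥ 1} c_j (-z)^j` of the logarithmic period. -/
noncomputable def w1tilde (z : ℝ) : ℝ := ∑' j : ℕ, localP2c (j + 1) * (-z) ^ (j + 1)

/-- The power-series part `ϖ̃₂(z) = ∑_{j ≥ 1} d_j (-z)^j` of the double-logarithmic
period. -/
noncomputable def w2tilde (z : ℝ) : ℝ := ∑' j : ℕ, localP2d (j + 1) * (-z) ^ (j + 1)

/-- The inverse mirror map `u(z) = e^{-t} = z exp(ϖ̃₁(z))` of local P². -/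
noncomputable def mirrorU (z : ℝ) : ℝ := z * Real.exp (w1tilde z)

/-! ### Auxiliary lemmas -/

local notation "l" => nhdsWithin (0:ℝ) (Set.Ioi 0)

theorem fact3 (j : ℕ) : Nat.factorial (3*j) ≤ 27^j * (Nat.factorial j)^3 := by
  induction j with
  | zero => simp
  | succ n ih =>
    have h1 : 3*(n+1) = 3*n + 1 + 1 + 1 := by ring
    rw [h1, Nat.factorial_succ, Nat.factorial_succ, Nat.factorial_succ]
    calc (3*n+1+1+1) * ((3*n+1+1) * ((3*n+1) * Nat.factorial (3*n)))
        ≤ (3*n+3) * ((3*n+3) * ((3*n+3) * (27^n * (Nat.factorial n)^3))) := by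
          exact Nat.mul_le_mul (by omega)
            (Nat.mul_le_mul (by omega) (Nat.mul_le_mul (by omega) ih))
      _ = 27^(n+1) * (Nat.factorial (n+1))^3 := by
          rw [Nat.factorial_succ]; ring

theorem factR (j : ℕ) : (Nat.factorial (3*j - 1) : ℝ) ≤ 27^j * (Nat.factorial j : ℝ)^3 := by
  have h1 : Nat.factorial (3*j-1) ≤ Nat.factorial (3*j) :=
    Nat.factorial_le (by omega)
  have h2 := fact3 j
  have : Nat.factorial (3*j-1) ≤ 27^j * (Nat.factorial j)^3 := h1.trans h2
  exact_mod_cast this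

theorem harm_mono {a b : ℕ} (h : a ≤ b) : harmonicNum a ≤ harmonicNum b := by
  unfold harmonicNum
  apply Finset.sum_le_sum_of_subset_of_nonneg (Finset.range_subset_range.2 h)
  intro i _ _; positivity

theorem harm_diff_le (j : ℕ) (hj : 1 ≤ j) :
    harmonicNum (3*j-1) - harmonicNum j ≤ 2 := by
  have hle : j ≤ 3*j-1 := by omega
  have : harmonicNum (3*j-1) - harmonicNum j
      = ∑ i ∈ Finset.Ico j (3*j-1), (1:ℝ)/(i+1) := by
    unfold harmonicNum
    rw [Finset.sum_Ico_eq_sub _ hle]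
  rw [this]
  calc ∑ i ∈ Finset.Ico j (3*j-1), (1:ℝ)/(i+1)
      ≤ ∑ _i ∈ Finset.Ico j (3*j-1), (1:ℝ)/(j+1) := by
        apply Finset.sum_le_sum
        intro i hi
        have hij : j ≤ i := (Finset.mem_Ico.1 hi).1
        apply div_le_div_of_nonneg_left (by norm_num) (by positivity)
        have : (j:ℝ) ≤ (i:ℝ) := Nat.cast_le.2 hij
        linarith
    _ = (3*j-1-j : ℕ) * ((1:ℝ)/(j+1)) := by
        rw [Finset.sum_const, Nat.card_Ico]; simp
    _ ≤ 2 := by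
        have hcard : ((3*j-1-j : ℕ) : ℝ) ≤ 2*((j:ℝ)+1) := by
          have h : ((3*j-1-j : ℕ) : ℝ) ≤ ((2*j+2 : ℕ) : ℝ) := Nat.cast_le.2 (by omega)
          push_cast at h ⊢; linarith
        have hpos : (0:ℝ) < (j:ℝ)+1 := by positivity
        rw [div_eq_mul_inv, one_mul] at *
        calc ((3*j-1-j : ℕ):ℝ) * (((j:ℝ)+1))⁻¹ ≤ (2*((j:ℝ)+1)) * (((j:ℝ)+1))⁻¹ := by
              apply mul_le_mul_of_nonneg_right hcard (by positivity)
          _ = 2 := by field_simp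

theorem c_bound (j : ℕ) (hj : 1 ≤ j) : |localP2c j| ≤ 3 * 27^j := by
  have hf : (0:ℝ) < (Nat.factorial j : ℝ)^3 := by positivity
  have h0 : (0:ℝ) ≤ localP2c j := by unfold localP2c; positivity
  rw [abs_of_nonneg h0]
  unfold localP2c
  rw [div_le_iff₀ hf]
  have := factR j
  nlinarith

theorem d_bound (j : ℕ) (hj : 1 ≤ j) : |localP2d j| ≤ 36 * 27^j := by
  have hf : (0:ℝ) < (Nat.factorial j : ℝ)^3 := by positivity
  have hd0 : 0 ≤ harmonicNum (3*j-1) - harmonicNum j :=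
    sub_nonneg.2 (harm_mono (by omega))
  have hd2 := harm_diff_le j hj
  have h0 : (0:ℝ) ≤ localP2d j := by
    unfold localP2d; positivity
  rw [abs_of_nonneg h0]
  unfold localP2d
  calc 18 * (Nat.factorial (3 * j - 1) : ℝ) / (Nat.factorial j : ℝ)^3 *
        (harmonicNum (3 * j - 1) - harmonicNum j)
      ≤ 18 * (Nat.factorial (3 * j - 1) : ℝ) / (Nat.factorial j : ℝ)^3 * 2 := by
        apply mul_le_mul_of_nonneg_left hd2 (by positivity)
    _ ≤ 36 * 27^j := by
        rw [div_mul_eq_mul_div, div_le_iff₀ hf]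
        have := factR j
        nlinarith

theorem tailO (a : ℕ → ℝ) (A : ℝ) (hA : 0 ≤ A) (ha : ∀ j, 1 ≤ j → |a j| ≤ A * 27^j) :
    (fun z : ℝ => (∑' j : ℕ, a (j+1) * (-z)^(j+1)) -
        (-(a 1 * z) + a 2 * z^2 - a 3 * z^3))
      =O[l] fun z => z^4 := by
  rw [isBigO_iff]
  refine ⟨2 * A * 27^4, ?_⟩
  filter_upwards [Ioo_mem_nhdsGT_of_mem
    (Set.mem_Ico.2 ⟨le_refl (0:ℝ), (by norm_num : (0:ℝ) < (1/54:ℝ))⟩)] with z hz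
  obtain ⟨hz0, hz54⟩ := hz
  have h27 : 27 * z ≤ 1/2 := by linarith
  have h27pos : 0 ≤ 27 * z := by linarith
  have h27lt : 27 * z < 1 := by linarith
  have hbound : ∀ j : ℕ, ‖a (j+1) * (-z)^(j+1)‖ ≤ (A * (27*z)) * (27*z)^j := by
    intro j
    have h1 : ‖a (j+1) * (-z)^(j+1)‖ = |a (j+1)| * z^(j+1) := by
      rw [norm_mul, norm_pow, norm_neg, Real.norm_eq_abs, Real.norm_eq_abs,
        abs_of_nonneg hz0.le]
    rw [h1]
    calc |a (j+1)| * z^(j+1) ≤ (A * 27^(j+1)) * z^(j+1) := by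
          apply mul_le_mul_of_nonneg_right (ha (j+1) (by omega)) (by positivity)
      _ = (A * (27*z)) * (27*z)^j := by rw [mul_pow]; ring
  have hgeo : Summable (fun j : ℕ => (A * (27*z)) * (27*z)^j) :=
    (summable_geometric_of_lt_one h27pos h27lt).mul_left _
  have hsum : Summable (fun j : ℕ => a (j+1) * (-z)^(j+1)) :=
    Summable.of_norm_bounded hgeo hbound
  have hsplit := Summable.sum_add_tsum_nat_add 3 hsum
  have hpoly : ∑ j ∈ Finset.range 3, a (j+1) * (-z)^(j+1)
      = -(a 1 * z) + a 2 * z^2 - a 3 * z^3 := by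
    simp [Finset.sum_range_succ]; ring
  have hbound4 : ∀ j : ℕ, ‖a (j+3+1) * (-z)^(j+3+1)‖ ≤ (A * 27^4 * z^4) * (27*z)^j := by
    intro j
    have h1 : ‖a (j+4) * (-z)^(j+4)‖ = |a (j+4)| * z^(j+4) := by
      rw [norm_mul, norm_pow, norm_neg, Real.norm_eq_abs, Real.norm_eq_abs,
        abs_of_nonneg hz0.le]
    have h2 : (j:ℕ)+3+1 = j+4 := by omega
    rw [h2, h1]
    calc |a (j+4)| * z^(j+4) ≤ (A * 27^(j+4)) * z^(j+4) := by
          apply mul_le_mul_of_nonneg_right (ha (j+4) (by omega)) (by positivity)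
      _ = (A * 27^4 * z^4) * (27*z)^j := by
          rw [pow_add, pow_add, mul_pow]; ring
  have hgeo4 : Summable (fun j : ℕ => (A * 27^4 * z^4) * (27*z)^j) :=
    (summable_geometric_of_lt_one h27pos h27lt).mul_left _
  have htail : ‖∑' j : ℕ, a (j+3+1) * (-z)^(j+3+1)‖ ≤ 2 * A * 27^4 * z^4 := by
    calc ‖∑' j : ℕ, a (j+3+1) * (-z)^(j+3+1)‖
        ≤ ∑' j : ℕ, (A * 27^4 * z^4) * (27*z)^j :=
          tsum_of_norm_bounded hgeo4.hasSum hbound4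
      _ = (A * 27^4 * z^4) * (1 - 27*z)⁻¹ := by
          rw [tsum_mul_left, tsum_geometric_of_lt_one h27pos h27lt]
      _ ≤ (A * 27^4 * z^4) * 2 := by
          apply mul_le_mul_of_nonneg_left _ (by positivity)
          rw [inv_le_comm₀ (by linarith) (by norm_num)]
          linarith
      _ = 2 * A * 27^4 * z^4 := by ring
  have key : (∑' j : ℕ, a (j+1) * (-z)^(j+1)) -
      (-(a 1 * z) + a 2 * z^2 - a 3 * z^3)
      = ∑' j : ℕ, a (j+3+1) * (-z)^(j+3+1) := by
    rw [← hsplit, hpoly]; ring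
  rw [key]
  calc ‖∑' j : ℕ, a (j+3+1) * (-z)^(j+3+1)‖ ≤ 2 * A * 27^4 * z^4 := htail
    _ = 2 * A * 27^4 * ‖z^4‖ := by
        rw [Real.norm_eq_abs, abs_of_nonneg (by positivity)]

theorem polyO {g : ℝ → ℝ} (hg : Continuous g) (n : ℕ) :
    (fun z : ℝ => z ^ n * g z) =O[l] fun z : ℝ => z ^ n := by
  have hg1 : (fun z : ℝ => g z) =O[l] (fun _ : ℝ => (1:ℝ)) :=
    ((hg.tendsto 0).mono_left nhdsWithin_le_nhds).isBigO_one ℝ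
  exact ((isBigO_refl (fun z : ℝ => z ^ n) l).mul hg1).congr_right fun z => by ring

theorem pow_down {m n : ℕ} (h : n ≤ m) :
    (fun z : ℝ => z ^ m) =O[l] fun z : ℝ => z ^ n := by
  have : (fun z : ℝ => z ^ m) = fun z : ℝ => z ^ n * z ^ (m - n) := by
    funext z; rw [← pow_add]; congr 1; omega
  rw [this]
  exact polyO (continuous_pow _) n

theorem exp_taylor3 {x : ℝ} (hx : |x| ≤ 1) :
    |Real.exp x - (1 + x + x^2/2)| ≤ |x|^3 := by
  have h := Real.exp_bound hx (n := 3) (by norm_num)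
  have hs : ∑ i ∈ Finset.range 3, x^i / (Nat.factorial i : ℝ) = 1 + x + x^2/2 := by
    simp [Finset.sum_range_succ, Nat.factorial]
  rw [hs] at h
  calc |Real.exp x - (1 + x + x^2/2)| ≤ |x|^3 * ((3:ℕ).succ / ((Nat.factorial 3 : ℝ) * 3)) := h
    _ ≤ |x|^3 := by
        have : ((3:ℕ).succ / ((Nat.factorial 3 : ℝ) * 3)) = 2/9 := by
          norm_num [Nat.factorial]
        rw [this]
        nlinarith [abs_nonneg x, pow_nonneg (abs_nonneg x) 3]

theorem localP2c_one : localP2c 1 = 6 := by norm_num [localP2c, Nat.factorial]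
theorem localP2c_two : localP2c 2 = 45 := by norm_num [localP2c, Nat.factorial]
theorem localP2c_three : localP2c 3 = 560 := by norm_num [localP2c, Nat.factorial]
theorem localP2d_one : localP2d 1 = 18 := by
  norm_num [localP2d, harmonicNum, Nat.factorial, Finset.sum_range_succ]
theorem localP2d_two : localP2d 2 = 423/2 := by
  norm_num [localP2d, harmonicNum, Nat.factorial, Finset.sum_range_succ]
theorem localP2d_three : localP2d 3 = 2972 := by
  norm_num [localP2d, harmonicNum, Nat.factorial, Finset.sum_range_succ]

theorem constmulO (c : ℝ) (n : ℕ) : (fun z : ℝ => c * z^n) =O[l] fun z : ℝ => z^n :=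
  (polyO (continuous_const (y := c)) n).congr_left fun z => by ring

theorem tendsto_zero_of_O {f : ℝ → ℝ} {n : ℕ} (hn : 1 ≤ n)
    (h : f =O[l] fun z : ℝ => z^n) : Tendsto f l (nhds 0) := by
  apply h.trans_tendsto
  have : Tendsto (fun z : ℝ => z^n) (nhds (0:ℝ)) (nhds ((0:ℝ)^n)) :=
    (continuous_pow n).tendsto 0
  rw [zero_pow (by omega)] at this
  exact this.mono_left nhdsWithin_le_nhds

theorem genus_zero_GW_localP2 :
    (fun z : ℝ => w2tilde z - (w1tilde z) ^ 2 -
        (-18 * mirrorU z + 135 / 2 * (mirrorU z) ^ 2 - 488 * (mirrorU z) ^ 3))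
      =O[nhdsWithin (0 : ℝ) (Set.Ioi 0)] (fun z : ℝ => z ^ 4) := by
  -- the O(z^4) expansions of the two periods
  have hw1O : (fun z : ℝ => w1tilde z - (-(6*z) + 45*z^2 - 560*z^3)) =O[l]
      (fun z : ℝ => z^4) := by
    have h := tailO localP2c 3 (by norm_num) c_bound
    rw [localP2c_one, localP2c_two, localP2c_three] at h
    exact h
  have hw2O : (fun z : ℝ => w2tilde z - (-(18*z) + 423/2*z^2 - 2972*z^3)) =O[l]
      (fun z : ℝ => z^4) := by
    have h := tailO localP2d 36 (by norm_num) d_bound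
    rw [localP2d_one, localP2d_two, localP2d_three] at h
    exact h
  -- order-3 expansion of w1tilde
  have hq : (fun z : ℝ => w1tilde z - (-(6*z) + 45*z^2)) =O[l] (fun z : ℝ => z^3) := by
    have h2 : (fun z : ℝ => -(560) * z^3) =O[l] (fun z : ℝ => z^3) := constmulO _ _
    exact ((hw1O.trans (pow_down (by norm_num))).add h2).congr_left fun z => by ring
  have hqz : (fun z : ℝ => -(6*z) + 45*z^2) =O[l] (fun z : ℝ => z^1) := by
    have h := polyO (g := fun z : ℝ => -6 + 45*z) (by continuity) 1
    exact h.congr_left fun z => by ring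
  have hw1z : (fun z : ℝ => w1tilde z) =O[l] (fun z : ℝ => z^1) :=
    ((hq.trans (pow_down (by norm_num))).add hqz).congr_left fun z => by ring
  -- exp(w1tilde) - exp(q) = O(z^3)
  have hεt : Tendsto (fun z : ℝ => w1tilde z - (-(6*z) + 45*z^2)) l (nhds 0) :=
    tendsto_zero_of_O (by norm_num) hq
  have habs1 : ∀ᶠ x : ℝ in nhds 0, |x| ≤ 1 := by
    filter_upwards [Metric.ball_mem_nhds (0:ℝ) one_pos] with x hx
    rw [Metric.mem_ball, Real.dist_eq, sub_zero] at hx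
    exact hx.le
  have hexpeps : (fun z : ℝ => Real.exp (w1tilde z - (-(6*z) + 45*z^2)) - 1) =O[l]
      (fun z : ℝ => w1tilde z - (-(6*z) + 45*z^2)) := by
    rw [isBigO_iff]
    refine ⟨2, ?_⟩
    filter_upwards [hεt.eventually habs1] with z hz
    rw [Real.norm_eq_abs, Real.norm_eq_abs]
    exact Real.abs_exp_sub_one_le hz
  have hexpq1 : (fun z : ℝ => Real.exp (-(6*z) + 45*z^2)) =O[l] (fun _ : ℝ => (1:ℝ)) := by
    have hc : Continuous fun z : ℝ => Real.exp (-(6*z) + 45*z^2) := by continuity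
    exact ((hc.tendsto 0).mono_left nhdsWithin_le_nhds).isBigO_one ℝ
  have hE1 : (fun z : ℝ => Real.exp (w1tilde z) - Real.exp (-(6*z) + 45*z^2)) =O[l]
      (fun z : ℝ => z^3) := by
    have h := hexpq1.mul (hexpeps.trans hq)
    refine (h.congr_left fun z => ?_).congr_right fun z => by ring
    rw [mul_sub, mul_one, ← Real.exp_add]
    ring_nf
  -- exp(q) - (1 + q + q^2/2) = O(z^3)
  have hqt : Tendsto (fun z : ℝ => -(6*z) + 45*z^2) l (nhds 0) :=
    tendsto_zero_of_O le_rfl hqz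
  have hE2 : (fun z : ℝ => Real.exp (-(6*z) + 45*z^2) -
      (1 + (-(6*z) + 45*z^2) + (-(6*z) + 45*z^2)^2/2)) =O[l] (fun z : ℝ => z^3) := by
    have h1 : (fun z : ℝ => Real.exp (-(6*z) + 45*z^2) -
        (1 + (-(6*z) + 45*z^2) + (-(6*z) + 45*z^2)^2/2)) =O[l]
        (fun z : ℝ => (-(6*z) + 45*z^2)^3) := by
      rw [isBigO_iff]
      refine ⟨1, ?_⟩
      filter_upwards [hqt.eventually habs1] with z hz
      rw [Real.norm_eq_abs, Real.norm_eq_abs, one_mul, abs_pow]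
      exact exp_taylor3 hz
    exact h1.trans ((hqz.pow 3).congr_right fun z => by ring)
  -- combined: exp(w1tilde) = 1 - 6z + 63z^2 + O(z^3)
  have hE : (fun z : ℝ => Real.exp (w1tilde z) - (1 - 6*z + 63*z^2)) =O[l]
      (fun z : ℝ => z^3) := by
    have h3 : (fun z : ℝ => (1 + (-(6*z) + 45*z^2) + (-(6*z) + 45*z^2)^2/2) -
        (1 - 6*z + 63*z^2)) =O[l] (fun z : ℝ => z^3) := by
      have : (fun z : ℝ => z^3 * (-270 + 2025/2*z)) =O[l] (fun z : ℝ => z^3) :=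
        polyO (by continuity) 3
      exact this.congr_left fun z => by ring
    exact ((hE1.add hE2).add h3).congr_left fun z => by ring
  -- bounded factors
  have hEO1 : (fun z : ℝ => 1 - 6*z + 63*z^2) =O[l] (fun _ : ℝ => (1:ℝ)) := by
    have hc : Continuous fun z : ℝ => 1 - 6*z + 63*z^2 := by continuity
    exact ((hc.tendsto 0).mono_left nhdsWithin_le_nhds).isBigO_one ℝ
  have hw1t : Tendsto (fun z : ℝ => w1tilde z) l (nhds 0) := tendsto_zero_of_O le_rfl hw1z
  have heO1 : (fun z : ℝ => Real.exp (w1tilde z)) =O[l] (fun _ : ℝ => (1:ℝ)) := by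
    have : Tendsto (fun z : ℝ => Real.exp (w1tilde z)) l (nhds (Real.exp 0)) :=
      (Real.continuous_exp.tendsto 0).comp hw1t
    exact this.isBigO_one ℝ
  have hzO1 : (fun z : ℝ => z) =O[l] (fun _ : ℝ => (1:ℝ)) :=
    ((continuous_id.tendsto 0).mono_left nhdsWithin_le_nhds).isBigO_one ℝ
  -- mirror map expansions
  have hu : (fun z : ℝ => mirrorU z - z * (1 - 6*z + 63*z^2)) =O[l]
      (fun z : ℝ => z^4) := by
    have h := (isBigO_refl (fun z : ℝ => z) l).mul hE
    refine (h.congr_left fun z => ?_).congr_right fun z => by ring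
    simp only [mirrorU]; ring
  have hu2 : (fun z : ℝ => (mirrorU z)^2 - (z * (1 - 6*z + 63*z^2))^2) =O[l]
      (fun z : ℝ => z^4) := by
    have h := ((isBigO_refl (fun z : ℝ => z^2) l).mul hE).mul (heO1.add hEO1)
    have h' : (fun z : ℝ => (mirrorU z)^2 - (z * (1 - 6*z + 63*z^2))^2) =O[l]
        (fun z : ℝ => z^2 * z^3 * 1) := h.congr_left fun z => by
      simp only [mirrorU]; ring
    exact h'.trans ((pow_down (by norm_num : 4 ≤ 5)).congr_left fun z => by ring)
  have hu3 : (fun z : ℝ => (mirrorU z)^3 - (z * (1 - 6*z + 63*z^2))^3) =O[l]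
      (fun z : ℝ => z^4) := by
    have hsq : (fun z : ℝ => Real.exp (w1tilde z) * Real.exp (w1tilde z) +
        Real.exp (w1tilde z) * (1 - 6*z + 63*z^2) + (1 - 6*z + 63*z^2) * (1 - 6*z + 63*z^2))
        =O[l] (fun _ : ℝ => (1:ℝ)) := by
      have := ((heO1.mul heO1).add (heO1.mul hEO1)).add (hEO1.mul hEO1)
      exact this.congr_right fun z => by norm_num
    have h := ((isBigO_refl (fun z : ℝ => z^3) l).mul hE).mul hsq
    have h' : (fun z : ℝ => (mirrorU z)^3 - (z * (1 - 6*z + 63*z^2))^3) =O[l]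
        (fun z : ℝ => z^3 * z^3 * 1) := h.congr_left fun z => by
      simp only [mirrorU]; ring
    exact h'.trans ((pow_down (by norm_num : 4 ≤ 6)).congr_left fun z => by ring)
  -- square of w1tilde
  have hw1sq : (fun z : ℝ => (w1tilde z)^2 - (-(6*z) + 45*z^2)^2) =O[l]
      (fun z : ℝ => z^4) := by
    have h := hq.mul (hw1z.add hqz)
    exact (h.congr_left fun z => by ring).congr_right fun z => by ring
  -- the residual explicit polynomial
  have hP : (fun z : ℝ => (-(18*z) + 423/2*z^2 - 2972*z^3) - (-(6*z) + 45*z^2)^2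
      + 18 * (z * (1 - 6*z + 63*z^2)) - 135/2 * (z * (1 - 6*z + 63*z^2))^2
      + 488 * (z * (1 - 6*z + 63*z^2))^3) =O[l] (fun z : ℝ => z^4) := by
    have h := polyO (g := fun z : ℝ => -21744 + 195966*z - 2960199/2*z^2 + 9130968*z^3
      - 34863696*z^4 + 122022936*z^5) (by fun_prop) 4
    exact h.congr_left fun z => by ring
  -- assemble
  have total := ((((hw2O.sub hw1sq).add (hu.const_mul_left 18)).sub
      (hu2.const_mul_left (135/2))).add (hu3.const_mul_left 488)).add hP
  exact total.congr_left fun z => by ring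
end

section
/- For E > log 3 set z = exp(−3E) ∈ (0, 1/27) and define ξ(E) = (ϖ₁(z)·ϖ₂′(z) − ϖ₂(z)·ϖ₁′(z)) / (8π²·ϖ₁′(z)), where ϖ₁(z) = log z + ϖ̃₁(z) and ϖ₂(z) = log²z + 2ϖ̃₁(z)log z + ϖ̃₂(z) are the periods of local P² and ′ denotes d/dz. Then ξ(E) − 9E²/(8π²) tends to 0 as E → +∞. -/
open Real Filter

/-- The logarithmic period `ϖ₁(z) = log z + ϖ̃₁(z)` of local P². -/
noncomputable def w1 (z : ℝ) : ℝ := Real.log z + w1tilde z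

/-- The double-logarithmic period `ϖ₂(z) = log² z + 2 ϖ̃₁(z) log z + ϖ̃₂(z)`. -/
noncomputable def w2 (z : ℝ) : ℝ :=
  (Real.log z) ^ 2 + 2 * w1tilde z * Real.log z + w2tilde z

/-- The function `ξ(E)` entering the exact quantization condition of local P² at
`ħ = 2π`, with `z = e^{-3E}`. -/
noncomputable def xiP2 (E : ℝ) : ℝ :=
  (w1 (Real.exp (-3 * E)) * deriv w2 (Real.exp (-3 * E)) -
      w2 (Real.exp (-3 * E)) * deriv w1 (Real.exp (-3 * E))) /
    (8 * Real.pi ^ 2 * deriv w1 (Real.exp (-3 * E)))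

/-! ### Auxiliary material -/

/-- Termwise derivative series for `w1tilde`. -/
noncomputable def g1 (z : ℝ) : ℝ :=
  ∑' n : ℕ, localP2c (n + 1) * (((n : ℝ) + 1) * (-z) ^ n * (-1))

/-- Termwise derivative series for `w2tilde`. -/
noncomputable def g2 (z : ℝ) : ℝ :=
  ∑' n : ℕ, localP2d (n + 1) * (((n : ℝ) + 1) * (-z) ^ n * (-1))

lemma choose_le_two_pow (n k : ℕ) : n.choose k ≤ 2 ^ n := by
  rcases le_or_gt k n with h | h
  · calc n.choose k ≤ ∑ m ∈ Finset.range (n + 1), n.choose m :=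
        Finset.single_le_sum (fun i _ => Nat.zero_le _)
          (Finset.mem_range.2 (Nat.lt_succ_of_le h))
    _ = 2 ^ n := Nat.sum_range_choose n
  · rw [Nat.choose_eq_zero_of_lt h]; exact Nat.zero_le _

lemma fac3_le (j : ℕ) : (3 * j).factorial ≤ 32 ^ j * j.factorial ^ 3 := by
  have h1 : (3 * j).factorial = (3 * j).choose j * (2 * j).factorial * j.factorial := by
    have := Nat.add_choose_mul_factorial_mul_factorial (2 * j) j
    have h2j : 2 * j + j = 3 * j := by ring
    rw [h2j] at this
    omega
  have h2 : (2 * j).factorial = (2 * j).choose j * j.factorial * j.factorial := by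
    have := Nat.add_choose_mul_factorial_mul_factorial j j
    have hjj : j + j = 2 * j := by ring
    rw [hjj] at this
    omega
  calc (3 * j).factorial = (3 * j).choose j * (2 * j).factorial * j.factorial := h1
    _ = (3 * j).choose j * ((2 * j).choose j * j.factorial * j.factorial) * j.factorial := by
        rw [← h2]
    _ ≤ 2 ^ (3 * j) * (2 ^ (2 * j) * j.factorial * j.factorial) * j.factorial := by
        gcongr <;> exact choose_le_two_pow _ _
    _ = 32 ^ j * j.factorial ^ 3 := by
        rw [show (32 : ℕ) = 2 ^ 5 by norm_num, ← pow_mul]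
        ring

lemma fac3_le' (j : ℕ) (hj : 1 ≤ j) :
    3 * (3 * j - 1).factorial ≤ 32 ^ j * j.factorial ^ 3 := by
  have h3j : 0 < 3 * j := by omega
  have := Nat.mul_factorial_pred h3j.ne'
  calc 3 * (3 * j - 1).factorial ≤ 3 * j * (3 * j - 1).factorial := by
        apply Nat.mul_le_mul_right; omega
    _ = (3 * j).factorial := this
    _ ≤ 32 ^ j * j.factorial ^ 3 := fac3_le j

lemma localP2c_nonneg (j : ℕ) : 0 ≤ localP2c j := by
  unfold localP2c; positivity

lemma localP2F_le (j : ℕ) (hj : 1 ≤ j) :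
    3 * ((3 * j - 1).factorial : ℝ) / ((j.factorial : ℝ)) ^ 3 ≤ 32 ^ j := by
  have hpos : (0 : ℝ) < ((j.factorial : ℝ)) ^ 3 := by positivity
  rw [div_le_iff₀ hpos]
  have := fac3_le' j hj
  calc 3 * ((3 * j - 1).factorial : ℝ) = ((3 * (3 * j - 1).factorial : ℕ) : ℝ) := by push_cast; ring
    _ ≤ ((32 ^ j * j.factorial ^ 3 : ℕ) : ℝ) := by exact_mod_cast this
    _ = 32 ^ j * ((j.factorial : ℝ)) ^ 3 := by push_cast; ring

lemma localP2c_le (j : ℕ) (hj : 1 ≤ j) : localP2c j ≤ 32 ^ j := by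
  unfold localP2c
  exact localP2F_le j hj

lemma harmonicNum_nonneg (k : ℕ) : 0 ≤ harmonicNum k := by
  unfold harmonicNum
  apply Finset.sum_nonneg
  intro i _
  positivity

lemma harmonicNum_le (k : ℕ) : harmonicNum k ≤ k := by
  unfold harmonicNum
  calc ∑ i ∈ Finset.range k, (1 : ℝ) / (i + 1) ≤ ∑ _i ∈ Finset.range k, (1 : ℝ) := by
        apply Finset.sum_le_sum
        intro i _
        rw [div_le_one (by positivity)]
        have : (0 : ℝ) ≤ (i : ℝ) := Nat.cast_nonneg i
        linarith
    _ = k := by simp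

lemma harmonicNum_mono : Monotone harmonicNum := by
  intro a b h
  unfold harmonicNum
  apply Finset.sum_le_sum_of_subset_of_nonneg (Finset.range_subset_range.2 h)
  intro i _ _
  positivity

lemma localP2d_nonneg (j : ℕ) : 0 ≤ localP2d j := by
  unfold localP2d
  apply mul_nonneg (by positivity)
  have := harmonicNum_mono (show j ≤ 3 * j - 1 by omega)
  linarith

lemma localP2d_le (n : ℕ) : localP2d (n + 1) ≤ 576 * 64 ^ n := by
  set j := n + 1 with hj
  have hH : harmonicNum (3 * j - 1) - harmonicNum j ≤ 3 * j := by
    have h1 : harmonicNum (3 * j - 1) ≤ ((3 * j - 1 : ℕ) : ℝ) := harmonicNum_le _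
    have h2 : 0 ≤ harmonicNum j := harmonicNum_nonneg j
    have h3 : ((3 * j - 1 : ℕ) : ℝ) ≤ 3 * j := by
      have : (3 * j - 1 : ℕ) ≤ 3 * j := by omega
      exact_mod_cast le_trans (Nat.cast_le.2 this) (by push_cast; norm_num)
    linarith
  have hHn : 0 ≤ harmonicNum (3 * j - 1) - harmonicNum j := by
    have := harmonicNum_mono (show j ≤ 3 * j - 1 by omega)
    linarith
  have hF : 3 * ((3 * j - 1).factorial : ℝ) / ((j.factorial : ℝ)) ^ 3 ≤ 32 ^ j :=
    localP2F_le j (by omega)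
  have hFn : 0 ≤ 3 * ((3 * j - 1).factorial : ℝ) / ((j.factorial : ℝ)) ^ 3 := by positivity
  have hd : localP2d j =
      6 * (3 * ((3 * j - 1).factorial : ℝ) / ((j.factorial : ℝ)) ^ 3) *
      (harmonicNum (3 * j - 1) - harmonicNum j) := by
    unfold localP2d; ring
  have hn2 : ((j : ℝ)) ≤ 2 ^ n := by
    have : (j : ℕ) ≤ 2 ^ n := by
      have := Nat.lt_two_pow_self (n := n)
      omega
    exact_mod_cast this
  calc localP2d j ≤ 6 * (32 ^ j) * (3 * j) := by
        rw [hd]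
        apply mul_le_mul
        · apply mul_le_mul_of_nonneg_left hF (by norm_num)
        · exact hH
        · exact hHn
        · positivity
    _ = 576 * (32 ^ n * j) := by
        rw [hj]; push_cast; ring
    _ ≤ 576 * (32 ^ n * 2 ^ n) := by
        apply mul_le_mul_of_nonneg_left _ (by norm_num)
        apply mul_le_mul_of_nonneg_left hn2 (by positivity)
    _ = 576 * 64 ^ n := by
        rw [← mul_pow]; norm_num

lemma localP2d_abs_le (n : ℕ) : |localP2d (n + 1)| ≤ 576 * 64 ^ n := by
  rw [abs_of_nonneg (localP2d_nonneg _)]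
  exact localP2d_le n

lemma nat_cast_succ_le_two_pow (n : ℕ) : ((n : ℝ) + 1) ≤ 2 ^ n := by
  have : (n + 1 : ℕ) ≤ 2 ^ n := Nat.lt_two_pow_self (n := n)
  exact_mod_cast this

/-! ### Termwise bounds -/

lemma Aterm_bound (n : ℕ) (y : ℝ) :
    ‖localP2c (n + 1) * (-y) ^ (n + 1)‖ ≤ (32 * |y|) * (32 * |y|) ^ n := by
  have h1 : ‖localP2c (n + 1) * (-y) ^ (n + 1)‖ = localP2c (n + 1) * |y| ^ (n + 1) := by
    rw [norm_mul, norm_pow, norm_neg, Real.norm_eq_abs, Real.norm_eq_abs,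
      abs_of_nonneg (localP2c_nonneg _)]
  rw [h1]
  calc localP2c (n + 1) * |y| ^ (n + 1) ≤ 32 ^ (n + 1) * |y| ^ (n + 1) := by
        apply mul_le_mul_of_nonneg_right (localP2c_le _ (by omega)) (by positivity)
    _ = (32 * |y|) * (32 * |y|) ^ n := by
        rw [← mul_pow]; ring

lemma Bterm_bound (n : ℕ) (y : ℝ) :
    ‖localP2d (n + 1) * (-y) ^ (n + 1)‖ ≤ (576 * |y|) * (64 * |y|) ^ n := by
  have h1 : ‖localP2d (n + 1) * (-y) ^ (n + 1)‖ = |localP2d (n + 1)| * |y| ^ (n + 1) := by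
    rw [norm_mul, norm_pow, norm_neg, Real.norm_eq_abs, Real.norm_eq_abs]
  rw [h1]
  calc |localP2d (n + 1)| * |y| ^ (n + 1) ≤ (576 * 64 ^ n) * |y| ^ (n + 1) := by
        apply mul_le_mul_of_nonneg_right (localP2d_abs_le _) (by positivity)
    _ = (576 * |y|) * (64 * |y|) ^ n := by
        rw [mul_pow]; ring

lemma g1term_bound (n : ℕ) (y : ℝ) :
    ‖localP2c (n + 1) * (((n : ℝ) + 1) * (-y) ^ n * (-1))‖ ≤ 32 * (64 * |y|) ^ n := by
  have h1 : ‖localP2c (n + 1) * (((n : ℝ) + 1) * (-y) ^ n * (-1))‖ =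
      localP2c (n + 1) * (((n : ℝ) + 1) * |y| ^ n) := by
    rw [norm_mul, norm_mul, norm_mul, norm_pow, norm_neg, norm_neg]
    simp [Real.norm_eq_abs, abs_of_nonneg (localP2c_nonneg (n + 1)),
      abs_of_nonneg (show (0:ℝ) ≤ (n : ℝ) + 1 by positivity)]
  rw [h1]
  calc localP2c (n + 1) * (((n : ℝ) + 1) * |y| ^ n)
      ≤ 32 ^ (n + 1) * (2 ^ n * |y| ^ n) := by
        apply mul_le_mul (localP2c_le _ (by omega))
        · apply mul_le_mul_of_nonneg_right (nat_cast_succ_le_two_pow n) (by positivity)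
        · positivity
        · positivity
    _ = 32 * (32 * (2 * |y|)) ^ n := by
        rw [mul_pow, mul_pow]; ring
    _ = 32 * (64 * |y|) ^ n := by ring_nf

lemma g2term_bound (n : ℕ) (y : ℝ) :
    ‖localP2d (n + 1) * (((n : ℝ) + 1) * (-y) ^ n * (-1))‖ ≤ 576 * (128 * |y|) ^ n := by
  have h1 : ‖localP2d (n + 1) * (((n : ℝ) + 1) * (-y) ^ n * (-1))‖ =
      |localP2d (n + 1)| * (((n : ℝ) + 1) * |y| ^ n) := by
    rw [norm_mul, norm_mul, norm_mul, norm_pow, norm_neg, norm_neg]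
    simp [Real.norm_eq_abs, abs_of_nonneg (show (0:ℝ) ≤ (n : ℝ) + 1 by positivity)]
  rw [h1]
  calc |localP2d (n + 1)| * (((n : ℝ) + 1) * |y| ^ n)
      ≤ (576 * 64 ^ n) * (2 ^ n * |y| ^ n) := by
        apply mul_le_mul (localP2d_abs_le _)
        · apply mul_le_mul_of_nonneg_right (nat_cast_succ_le_two_pow n) (by positivity)
        · positivity
        · positivity
    _ = 576 * (64 * (2 * |y|)) ^ n := by
        rw [mul_pow, mul_pow]; ring
    _ = 576 * (128 * |y|) ^ n := by ring_nf

/-! ### A geometric tsum bound -/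

lemma tsum_norm_le_of_geom {f : ℕ → ℝ} {C r : ℝ} (hC : 0 ≤ C) (hr0 : 0 ≤ r) (hr : r ≤ 1 / 2)
    (h : ∀ n, ‖f n‖ ≤ C * r ^ n) : ‖∑' n, f n‖ ≤ 2 * C := by
  have hr1 : r < 1 := lt_of_le_of_lt hr (by norm_num)
  have hsum : Summable (fun n : ℕ => C * r ^ n) :=
    (summable_geometric_of_lt_one hr0 hr1).mul_left C
  have hfn : Summable (fun n => ‖f n‖) :=
    Summable.of_nonneg_of_le (fun n => norm_nonneg _) h hsum
  have hinv : (1 - r)⁻¹ ≤ 2 := by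
    rw [inv_le_comm₀ (by linarith) (by norm_num)]
    linarith
  calc ‖∑' n, f n‖ ≤ ∑' n, ‖f n‖ := norm_tsum_le_tsum_norm hfn
    _ ≤ ∑' n : ℕ, C * r ^ n := Summable.tsum_le_tsum h hfn hsum
    _ = C * (1 - r)⁻¹ := by rw [tsum_mul_left, tsum_geometric_of_lt_one hr0 hr1]
    _ ≤ 2 * C := by nlinarith

/-! ### Bounds on the series and their derivative series -/

lemma w1tilde_bound {z : ℝ} (h0 : 0 ≤ z) (h1 : z ≤ 1 / 256) : |w1tilde z| ≤ 64 * z := by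
  have habs : |z| = z := abs_of_nonneg h0
  have := tsum_norm_le_of_geom (f := fun n => localP2c (n + 1) * (-z) ^ (n + 1))
    (C := 32 * z) (r := 32 * z) (by positivity) (by positivity) (by linarith)
    (fun n => by simpa [habs] using Aterm_bound n z)
  rw [Real.norm_eq_abs] at this
  calc |w1tilde z| ≤ 2 * (32 * z) := this
    _ = 64 * z := by ring

lemma w2tilde_bound {z : ℝ} (h0 : 0 ≤ z) (h1 : z ≤ 1 / 256) : |w2tilde z| ≤ 1152 * z := by
  have habs : |z| = z := abs_of_nonneg h0
  have := tsum_norm_le_of_geom (f := fun n => localP2d (n + 1) * (-z) ^ (n + 1))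
    (C := 576 * z) (r := 64 * z) (by positivity) (by positivity) (by linarith)
    (fun n => by simpa [habs] using Bterm_bound n z)
  rw [Real.norm_eq_abs] at this
  calc |w2tilde z| ≤ 2 * (576 * z) := this
    _ = 1152 * z := by ring

lemma g1_bound {z : ℝ} (h0 : 0 ≤ z) (h1 : z ≤ 1 / 256) : |g1 z| ≤ 64 := by
  have habs : |z| = z := abs_of_nonneg h0
  have := tsum_norm_le_of_geom
    (f := fun n => localP2c (n + 1) * (((n : ℝ) + 1) * (-z) ^ n * (-1)))
    (C := 32) (r := 64 * z) (by norm_num) (by positivity) (by linarith)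
    (fun n => by simpa [habs] using g1term_bound n z)
  rw [Real.norm_eq_abs] at this
  calc |g1 z| ≤ 2 * 32 := this
    _ = 64 := by norm_num

lemma g2_bound {z : ℝ} (h0 : 0 ≤ z) (h1 : z ≤ 1 / 256) : |g2 z| ≤ 1152 := by
  have habs : |z| = z := abs_of_nonneg h0
  have := tsum_norm_le_of_geom
    (f := fun n => localP2d (n + 1) * (((n : ℝ) + 1) * (-z) ^ n * (-1)))
    (C := 576) (r := 128 * z) (by norm_num) (by positivity) (by linarith)
    (fun n => by simpa [habs] using g2term_bound n z)
  rw [Real.norm_eq_abs] at this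
  calc |g2 z| ≤ 2 * 576 := this
    _ = 1152 := by norm_num

/-! ### Differentiability -/

lemma term_hasDerivAt (c : ℝ) (n : ℕ) (y : ℝ) :
    HasDerivAt (fun x : ℝ => c * (-x) ^ (n + 1))
      (c * (((n : ℝ) + 1) * (-y) ^ n * (-1))) y := by
  have h : HasDerivAt (fun x : ℝ => c * (-x) ^ (n + 1))
      (c * (((n + 1 : ℕ) : ℝ) * (-y) ^ (n + 1 - 1) * (-1))) y :=
    ((hasDerivAt_neg y).pow (n + 1)).const_mul c
  convert h using 1
  push_cast
  ring_nf

lemma w1tilde_hasDerivAt {z : ℝ} (hz : |z| < 1 / 256) : HasDerivAt w1tilde (g1 z) z := by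
  have key := hasDerivAt_tsum_of_isPreconnected
    (u := fun n : ℕ => 32 * (1 / 4 : ℝ) ^ n)
    (t := Metric.ball (0 : ℝ) (1 / 256))
    (g := fun n y => localP2c (n + 1) * (-y) ^ (n + 1))
    (g' := fun n y => localP2c (n + 1) * (((n : ℝ) + 1) * (-y) ^ n * (-1)))
    (y₀ := 0)
    ((summable_geometric_of_lt_one (by norm_num) (by norm_num)).mul_left 32)
    Metric.isOpen_ball (convex_ball (0 : ℝ) (1 / 256)).isPreconnected
    (fun n y _ => term_hasDerivAt _ n y)
    (fun n y hy => by
      have hy' : |y| < 1 / 256 := by simpa [Real.dist_eq] using hy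
      calc ‖localP2c (n + 1) * (((n : ℝ) + 1) * (-y) ^ n * (-1))‖
          ≤ 32 * (64 * |y|) ^ n := g1term_bound n y
        _ ≤ 32 * (1 / 4) ^ n := by
            apply mul_le_mul_of_nonneg_left _ (by norm_num)
            apply pow_le_pow_left₀ (by positivity) (by linarith)
    )
    (by simp [Metric.mem_ball])
    (by simp only [neg_zero, zero_pow (Nat.succ_ne_zero _), mul_zero]; exact summable_zero)
    (by simpa [Metric.mem_ball, Real.dist_eq] using hz)
  exact key

lemma w2tilde_hasDerivAt {z : ℝ} (hz : |z| < 1 / 256) : HasDerivAt w2tilde (g2 z) z := by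
  have key := hasDerivAt_tsum_of_isPreconnected
    (u := fun n : ℕ => 576 * (1 / 2 : ℝ) ^ n)
    (t := Metric.ball (0 : ℝ) (1 / 256))
    (g := fun n y => localP2d (n + 1) * (-y) ^ (n + 1))
    (g' := fun n y => localP2d (n + 1) * (((n : ℝ) + 1) * (-y) ^ n * (-1)))
    (y₀ := 0)
    ((summable_geometric_of_lt_one (by norm_num) (by norm_num)).mul_left 576)
    Metric.isOpen_ball (convex_ball (0 : ℝ) (1 / 256)).isPreconnected
    (fun n y _ => term_hasDerivAt _ n y)
    (fun n y hy => by
      have hy' : |y| < 1 / 256 := by simpa [Real.dist_eq] using hy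
      calc ‖localP2d (n + 1) * (((n : ℝ) + 1) * (-y) ^ n * (-1))‖
          ≤ 576 * (128 * |y|) ^ n := g2term_bound n y
        _ ≤ 576 * (1 / 2) ^ n := by
            apply mul_le_mul_of_nonneg_left _ (by norm_num)
            apply pow_le_pow_left₀ (by positivity) (by linarith)
    )
    (by simp [Metric.mem_ball])
    (by simp only [neg_zero, zero_pow (Nat.succ_ne_zero _), mul_zero]; exact summable_zero)
    (by simpa [Metric.mem_ball, Real.dist_eq] using hz)
  exact key

/-! ### The key identity -/

lemma exp_le_small {E : ℝ} (hE : 3 ≤ E) : Real.exp (-3 * E) ≤ 1 / 512 := by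
  have h1 : Real.exp (-3 * E) ≤ Real.exp (-9) := by
    apply Real.exp_le_exp.2
    linarith
  have h2 : (512 : ℝ) ≤ Real.exp 9 := by
    have he : (2 : ℝ) ≤ Real.exp 1 := by
      have := Real.exp_one_gt_d9
      linarith
    have : (2 : ℝ) ^ (9 : ℕ) ≤ Real.exp 1 ^ (9 : ℕ) :=
      pow_le_pow_left₀ (by norm_num) he 9
    calc (512 : ℝ) = 2 ^ (9 : ℕ) := by norm_num
      _ ≤ Real.exp 1 ^ (9 : ℕ) := this
      _ = Real.exp 9 := by
          rw [← Real.exp_nat_mul]; norm_num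
  have h3 : Real.exp (-9) ≤ 1 / 512 := by
    rw [Real.exp_neg]
    rw [inv_le_comm₀ (Real.exp_pos 9) (by norm_num)]
    linarith
  linarith

lemma key_identity {E : ℝ} (hE : 3 ≤ E) :
    xiP2 E - 9 * E ^ 2 / (8 * Real.pi ^ 2) =
      ((-3 * E) * (2 * w1tilde (Real.exp (-3 * E)) + Real.exp (-3 * E) * g2 (Real.exp (-3 * E)))
        + 2 * (w1tilde (Real.exp (-3 * E))) ^ 2 - w2tilde (Real.exp (-3 * E))
        + Real.exp (-3 * E) * (w1tilde (Real.exp (-3 * E)) * g2 (Real.exp (-3 * E))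
            - g1 (Real.exp (-3 * E)) * w2tilde (Real.exp (-3 * E)))) /
      (8 * Real.pi ^ 2 * (1 + Real.exp (-3 * E) * g1 (Real.exp (-3 * E)))) := by
  set z := Real.exp (-3 * E) with hzdef
  have hz0 : 0 < z := Real.exp_pos _
  have hzsmall : z ≤ 1 / 512 := exp_le_small hE
  have hz256 : z ≤ 1 / 256 := by linarith
  have hzabs : |z| < 1 / 256 := by
    rw [abs_of_nonneg hz0.le]; linarith
  have hA := w1tilde_bound hz0.le hz256
  have hG1 := g1_bound hz0.le hz256
  have hlog : Real.log z = -3 * E := by rw [hzdef, Real.log_exp]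
  -- derivatives
  have hd1t : HasDerivAt w1tilde (g1 z) z := w1tilde_hasDerivAt hzabs
  have hd2t : HasDerivAt w2tilde (g2 z) z := w2tilde_hasDerivAt hzabs
  have hlogd : HasDerivAt Real.log z⁻¹ z := Real.hasDerivAt_log hz0.ne'
  have hd1 : HasDerivAt w1 (z⁻¹ + g1 z) z := hlogd.add hd1t
  have hD1 : deriv w1 z = z⁻¹ + g1 z := hd1.deriv
  have hsq : HasDerivAt (fun y : ℝ => (Real.log y) ^ 2)
      ((2 : ℕ) * (Real.log z) ^ 1 * z⁻¹) z := hlogd.pow 2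
  have hmid : HasDerivAt (fun y : ℝ => 2 * w1tilde y * Real.log y)
      (2 * g1 z * Real.log z + 2 * w1tilde z * z⁻¹) z :=
    (hd1t.const_mul 2).mul hlogd
  have hd2 : HasDerivAt w2
      (((2 : ℕ) * (Real.log z) ^ 1 * z⁻¹ + (2 * g1 z * Real.log z + 2 * w1tilde z * z⁻¹))
        + g2 z) z := (hsq.add hmid).add hd2t
  have hD2 : deriv w2 z =
      ((2 : ℕ) * (Real.log z) ^ 1 * z⁻¹ + (2 * g1 z * Real.log z + 2 * w1tilde z * z⁻¹))
        + g2 z := hd2.deriv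
  -- nonvanishing facts
  have hpi : Real.pi ≠ 0 := Real.pi_ne_zero
  have hden : (0 : ℝ) < 1 + z * g1 z := by
    have h1 : |z * g1 z| ≤ 1 / 4 := by
      rw [abs_mul, abs_of_nonneg hz0.le]
      calc z * |g1 z| ≤ (1 / 256) * 64 := by
            apply mul_le_mul hz256 hG1 (abs_nonneg _) (by norm_num)
        _ = 1 / 4 := by norm_num
    have := abs_le.1 h1
    linarith [this.1]
  have hD1pos : (0 : ℝ) < z⁻¹ + g1 z := by
    have : z⁻¹ + g1 z = (1 + z * g1 z) / z := by
      field_simp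
    rw [this]
    positivity
  have hD1ne : z⁻¹ + g1 z ≠ 0 := hD1pos.ne'
  -- unfold and conclude
  show (w1 z * deriv w2 z - w2 z * deriv w1 z) / (8 * Real.pi ^ 2 * deriv w1 z)
      - 9 * E ^ 2 / (8 * Real.pi ^ 2) = _
  rw [hD1, hD2]
  show ((Real.log z + w1tilde z) * _ -
      ((Real.log z) ^ 2 + 2 * w1tilde z * Real.log z + w2tilde z) * _) / _ - _ = _
  have hdenne : 1 + z * g1 z ≠ 0 := hden.ne'
  have hzne : z ≠ 0 := hz0.ne'
  have hsplit : z⁻¹ + g1 z = (1 + z * g1 z) / z := by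
    field_simp
  rw [hlog, hsplit]
  field_simp
  ring

theorem xiP2_large_energy :
    Filter.Tendsto (fun E : ℝ => xiP2 E - 9 * E ^ 2 / (8 * Real.pi ^ 2))
      Filter.atTop (nhds 0) := by
  -- squeeze against (3840 E + 400000) * exp (-3 E)
  have hbound : ∀ᶠ E in atTop,
      ‖xiP2 E - 9 * E ^ 2 / (8 * Real.pi ^ 2)‖ ≤
        (3840 * E + 400000) * Real.exp (-3 * E) := by
    filter_upwards [eventually_ge_atTop (3 : ℝ)] with E hE
    set z := Real.exp (-3 * E) with hzdef
    have hz0 : 0 < z := Real.exp_pos _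
    have hz512 : z ≤ 1 / 512 := exp_le_small hE
    have hz256 : z ≤ 1 / 256 := by linarith
    have hz1 : z ≤ 1 := by linarith
    have hA := w1tilde_bound hz0.le hz256
    have hB := w2tilde_bound hz0.le hz256
    have hG1 := g1_bound hz0.le hz256
    have hG2 := g2_bound hz0.le hz256
    have hApos := abs_nonneg (w1tilde z)
    rw [key_identity hE, Real.norm_eq_abs, abs_div]
    -- denominator bound
    have hden : (1 : ℝ) ≤ |8 * Real.pi ^ 2 * (1 + z * g1 z)| := by
      have hpi : (3 : ℝ) < Real.pi := Real.pi_gt_three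
      have hg : -(1 / 4 : ℝ) ≤ z * g1 z := by
        have h1 : |z * g1 z| ≤ 1 / 4 := by
          rw [abs_mul, abs_of_nonneg hz0.le]
          calc z * |g1 z| ≤ (1 / 256) * 64 :=
                mul_le_mul hz256 hG1 (abs_nonneg _) (by norm_num)
            _ = 1 / 4 := by norm_num
        linarith [(abs_le.1 h1).1]
      have h2 : (0 : ℝ) < 1 + z * g1 z := by linarith
      rw [abs_of_nonneg (by positivity : (0:ℝ) ≤ 8 * Real.pi ^ 2 * (1 + z * g1 z))]
      nlinarith
    -- numerator bound
    have hnum : |(-3 * E) * (2 * w1tilde z + z * g2 z) + 2 * (w1tilde z) ^ 2 - w2tilde z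
        + z * (w1tilde z * g2 z - g1 z * w2tilde z)| ≤ (3840 * E + 400000) * z := by
      have hE0 : (0 : ℝ) ≤ E := by linarith
      have t1 : |(-3 * E) * (2 * w1tilde z + z * g2 z)| ≤ 3 * E * (1280 * z) := by
        rw [abs_mul]
        have h1 : |(-3 : ℝ) * E| = 3 * E := by
          rw [abs_of_nonpos (by linarith)]; ring
        rw [h1]
        apply mul_le_mul_of_nonneg_left _ (by linarith)
        calc |2 * w1tilde z + z * g2 z| ≤ 2 * |w1tilde z| + z * |g2 z| := by
              have := abs_add_le (2 * w1tilde z) (z * g2 z)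
              rw [abs_mul, abs_mul, abs_of_nonneg hz0.le] at this
              simpa [abs_of_nonneg, abs_two] using this
          _ ≤ 2 * (64 * z) + z * 1152 := by
              have := mul_le_mul_of_nonneg_left hG2 hz0.le
              linarith
          _ = 1280 * z := by ring
      have t2 : |2 * (w1tilde z) ^ 2| ≤ 8192 * z := by
        rw [abs_mul, abs_pow, abs_two]
        have h1 : |w1tilde z| ^ 2 ≤ (64 * z) * (64 * z) := by
          rw [sq]
          exact mul_le_mul hA hA hApos (by positivity)
        calc 2 * |w1tilde z| ^ 2 ≤ 2 * ((64 * z) * (64 * z)) := by linarith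
          _ = 8192 * (z * z) := by ring
          _ ≤ 8192 * (1 * z) := by
              apply mul_le_mul_of_nonneg_left _ (by norm_num)
              exact mul_le_mul_of_nonneg_right hz1 hz0.le
          _ = 8192 * z := by ring
      have t3 : |z * (w1tilde z * g2 z - g1 z * w2tilde z)| ≤ 147456 * z := by
        rw [abs_mul, abs_of_nonneg hz0.le]
        have h1 : |w1tilde z * g2 z - g1 z * w2tilde z| ≤ 147456 := by
          have h2 : |w1tilde z * g2 z| ≤ 64 * z * 1152 := by
            rw [abs_mul]
            exact mul_le_mul hA hG2 (abs_nonneg _) (by positivity)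
          have h3 : |g1 z * w2tilde z| ≤ 64 * (1152 * z) := by
            rw [abs_mul]
            exact mul_le_mul hG1 hB (abs_nonneg _) (by norm_num)
          have h4 : 64 * z * 1152 ≤ 64 * 1 * 1152 := by nlinarith
          have h5 : 64 * (1152 * z) ≤ 64 * (1152 * 1) := by nlinarith
          calc |w1tilde z * g2 z - g1 z * w2tilde z|
              ≤ |w1tilde z * g2 z| + |g1 z * w2tilde z| := abs_sub _ _
            _ ≤ 147456 := by linarith
        calc z * |w1tilde z * g2 z - g1 z * w2tilde z| ≤ z * 147456 := by
              exact mul_le_mul_of_nonneg_left h1 hz0.le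
          _ = 147456 * z := by ring
      calc |(-3 * E) * (2 * w1tilde z + z * g2 z) + 2 * (w1tilde z) ^ 2 - w2tilde z
            + z * (w1tilde z * g2 z - g1 z * w2tilde z)|
          ≤ |(-3 * E) * (2 * w1tilde z + z * g2 z)| + |2 * (w1tilde z) ^ 2| + |w2tilde z|
            + |z * (w1tilde z * g2 z - g1 z * w2tilde z)| := by
            have h1 := abs_add_le ((-3 * E) * (2 * w1tilde z + z * g2 z)) (2 * (w1tilde z) ^ 2)
            have h2 := abs_sub ((-3 * E) * (2 * w1tilde z + z * g2 z) + 2 * (w1tilde z) ^ 2)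
              (w2tilde z)
            have h3 := abs_add_le ((-3 * E) * (2 * w1tilde z + z * g2 z) + 2 * (w1tilde z) ^ 2
              - w2tilde z) (z * (w1tilde z * g2 z - g1 z * w2tilde z))
            linarith
        _ ≤ 3 * E * (1280 * z) + 8192 * z + 1152 * z + 147456 * z := by linarith
        _ ≤ (3840 * E + 400000) * z := by nlinarith
    calc _ ≤ |(-3 * E) * (2 * w1tilde z + z * g2 z) + 2 * (w1tilde z) ^ 2 - w2tilde z
            + z * (w1tilde z * g2 z - g1 z * w2tilde z)| := div_le_self (abs_nonneg _) hden
      _ ≤ (3840 * E + 400000) * z := hnum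
  -- the bounding function tends to zero
  have hlim : Tendsto (fun E : ℝ => (3840 * E + 400000) * Real.exp (-3 * E)) atTop (nhds 0) := by
    have h3E : Tendsto (fun E : ℝ => 3 * E) atTop atTop :=
      Tendsto.const_mul_atTop (by norm_num) tendsto_id
    have h1 : Tendsto (fun E : ℝ => (3 * E) ^ 1 * Real.exp (-(3 * E))) atTop (nhds 0) :=
      (Real.tendsto_pow_mul_exp_neg_atTop_nhds_zero 1).comp h3E
    have h2 : Tendsto (fun E : ℝ => E * Real.exp (-3 * E)) atTop (nhds 0) := by
      have := h1.const_mul (1 / 3 : ℝ)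
      rw [mul_zero] at this
      refine this.congr fun E => ?_
      rw [neg_mul]
      ring
    have h3 : Tendsto (fun E : ℝ => Real.exp (-3 * E)) atTop (nhds 0) := by
      have hneg : Tendsto (fun E : ℝ => -3 * E) atTop atBot := by
        have h := tendsto_neg_atTop_atBot.comp h3E
        refine h.congr fun E => ?_
        simp only [Function.comp]
        ring
      exact Real.tendsto_exp_atBot.comp hneg
    have h4 := (h2.const_mul (3840 : ℝ)).add (h3.const_mul (400000 : ℝ))
    rw [mul_zero, mul_zero, add_zero] at h4
    refine h4.congr fun E => ?_
    ring
  exact squeeze_zero_norm' hbound hlim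
end
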